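/- Let S be a noetherian ring graded by a finitely generated abelian group D, generated as an S_0-algebra by homogeneous elements g_1,…,g_n of degrees d_1,…,d_n. Call a degree d ∈ D generic if for every representation d = Σ n_i d_i with n_i ∈ ℕ, the set {d_i : n_i ≥ k} generates a finite-index subgroup of D (for a fixed k ≥ 1). If p ⊆ S_0 is a prime ideal such that S_+^k ⊆ pS_+ (where S_+ is the ideal generated by relevant elements), then pS_d = S_d for every generic degree d, and consequently (S_d)_p = 0. -/

import Mathlib

/-- A homogeneous element `f` of a `D`-graded ring is *relevant* if some power `f^n`
(`n ≥ 1`) factors into homogeneous elements whose degrees generate a finite-index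
subgroup of `D`. -/
def Relevant {D A : Type*} [AddCommGroup D] [CommRing A]
    (𝒜 : D → AddSubgroup A) (f : A) : Prop :=
  (∃ d, f ∈ 𝒜 d) ∧
    ∃ n : ℕ, 1 ≤ n ∧ ∃ (ℓ : ℕ) (g : Fin ℓ → A) (e : Fin ℓ → D),
      (∀ i, g i ∈ 𝒜 (e i)) ∧ f ^ n = ∏ i, g i ∧
      (AddSubgroup.closure (Set.range e)).FiniteIndex

open Pointwise

section Aux
variable {D S : Type*} [AddCommGroup D] [DecidableEq D] [CommRing S]
  (𝒜 : D → AddSubgroup S) [GradedRing 𝒜]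
  {n : ℕ} {g : Fin n → S} {dg : Fin n → D}

lemma aux_proj_mul_left {a : S} (ha : a ∈ 𝒜 0) (b : S) (d : D) :
    (DirectSum.decompose 𝒜 (a * b) d : S) = a * (DirectSum.decompose 𝒜 b d : S) := by
  have := DirectSum.coe_decompose_mul_add_of_left_mem 𝒜 (j := d) (b := b) ha
  rwa [zero_add] at this

lemma aux_proj_mul_right {a : S} (ha : a ∈ 𝒜 0) (b : S) (d : D) :
    (DirectSum.decompose 𝒜 (b * a) d : S) = (DirectSum.decompose 𝒜 b d : S) * a := by
  have := DirectSum.coe_decompose_mul_add_of_right_mem 𝒜 (i := d) (a := b) ha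
  rwa [add_zero] at this

lemma aux_proj_mul_right' {b : S} {d : D} (hb : b ∈ 𝒜 d) (a : S) :
    (DirectSum.decompose 𝒜 (a * b) d : S) = (DirectSum.decompose 𝒜 a 0 : S) * b := by
  have := DirectSum.coe_decompose_mul_add_of_right_mem 𝒜 (i := (0 : D)) (a := a) hb
  rwa [zero_add] at this

/-- Key lemma B : a degree-`d` element of `p·S` is a sum of elements `a * x'` with
`a ∈ p`, `x' ∈ 𝒜 d`. -/
lemma aux_keyB (p : Ideal (SetLike.GradeZero.subring 𝒜)) {d : D} {x : S}
    (hx : x ∈ Ideal.map (SetLike.GradeZero.subring 𝒜).subtype p) (hxd : x ∈ 𝒜 d) :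
    x ∈ AddSubmonoid.closure
      {y : S | ∃ a : SetLike.GradeZero.subring 𝒜, a ∈ p ∧ ∃ x' ∈ 𝒜 d, y = ↑a * x'} := by
  rw [Ideal.map] at hx
  obtain ⟨c, hsupp, hsum⟩ := Submodule.mem_span_set (R := S) |>.mp hx
  have hx2 : x = ∑ a ∈ c.support, (DirectSum.decompose 𝒜 (c a) d : S) * a := by
    have h1 : x = (DirectSum.decompose 𝒜 x d : S) :=
      (DirectSum.decompose_of_mem_same 𝒜 hxd).symm
    rw [h1]
    conv_lhs => rw [← hsum]
    rw [Finsupp.sum]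
    rw [show ((DirectSum.decompose 𝒜 (∑ a ∈ c.support, c a • a) d : S))
        = GradedRing.proj 𝒜 d (∑ a ∈ c.support, c a • a) from rfl]
    rw [map_sum]
    refine Finset.sum_congr rfl fun a ha => ?_
    obtain ⟨a', _, rfl⟩ := hsupp ha
    rw [smul_eq_mul, GradedRing.proj_apply]
    exact aux_proj_mul_right 𝒜 a'.2 _ _
  rw [hx2]
  refine AddSubmonoid.sum_mem _ fun a ha => ?_
  obtain ⟨a', ha', haa⟩ := hsupp ha
  refine AddSubmonoid.subset_closure ⟨a', ha', (DirectSum.decompose 𝒜 (c a) d : S),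
    SetLike.coe_mem _, ?_⟩
  rw [← haa, mul_comm]
  rfl

lemma aux_mono (hg : ∀ i, g i ∈ 𝒜 (dg i))
    (hgen : Subring.closure ((𝒜 0 : Set S) ∪ Set.range g) = ⊤) (x : S) :
    x ∈ AddSubmonoid.closure
      {y : S | ∃ a ∈ 𝒜 0, ∃ m : Fin n → ℕ, y = a * ∏ i, g i ^ m i} := by
  set Mon : Set S := {y : S | ∃ a ∈ 𝒜 0, ∃ m : Fin n → ℕ, y = a * ∏ i, g i ^ m i} with hMon
  have hmulset : Mon * Mon ⊆ Mon := by
    rw [Set.mul_subset_iff]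
    rintro _ ⟨a, ha, m, rfl⟩ _ ⟨b, hb, m', rfl⟩
    refine ⟨a * b, by simpa using SetLike.mul_mem_graded ha hb, m + m', ?_⟩
    rw [mul_mul_mul_comm]
    congr 1
    rw [← Finset.prod_mul_distrib]
    exact Finset.prod_congr rfl fun i _ => (pow_add _ _ _).symm
  let R' : Subring S :=
    { carrier := AddSubmonoid.closure Mon
      zero_mem' := zero_mem _
      add_mem' := fun hx hy => add_mem hx hy
      one_mem' := AddSubmonoid.subset_closure ⟨1, SetLike.one_mem_graded _, 0, by simp⟩
      mul_mem' := fun hx hy => by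
        have := AddSubmonoid.mul_mem_mul hx hy
        rw [AddSubmonoid.closure_mul_closure] at this
        exact AddSubmonoid.closure_mono hmulset this
      neg_mem' := by
        intro x hx
        induction hx using AddSubmonoid.closure_induction with
        | mem y hy =>
          obtain ⟨a, ha, m, rfl⟩ := hy
          exact AddSubmonoid.subset_closure ⟨-a, neg_mem ha, m, by ring⟩
        | zero => simpa using zero_mem _
        | add y z _ _ hy hz =>
          rw [neg_add]
          exact add_mem hy hz }
  have : x ∈ R' := by
    have h1 : Subring.closure ((𝒜 0 : Set S) ∪ Set.range g) ≤ R' := by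
      rw [Subring.closure_le]
      rintro y (hy | ⟨i, rfl⟩)
      · exact AddSubmonoid.subset_closure ⟨y, hy, 0, by simp⟩
      · refine AddSubmonoid.subset_closure ⟨1, SetLike.one_mem_graded _, Pi.single i 1, ?_⟩
        rw [one_mul]
        rw [Finset.prod_eq_single i (fun j _ hj => by simp [Pi.single_eq_of_ne hj])
          (by simp)]
        simp
    rw [hgen] at h1
    exact h1 trivial
  exact this

lemma aux_relevant (hg : ∀ i, g i ∈ 𝒜 (dg i)) (k : ℕ) (m : Fin n → ℕ)
    (hfi : (AddSubgroup.closure {e : D | ∃ i, k ≤ m i ∧ e = dg i}).FiniteIndex) :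
    Relevant 𝒜 (∏ i ∈ Finset.univ.filter (fun i => k ≤ m i), g i) := by
  classical
  set I := Finset.univ.filter (fun i : Fin n => k ≤ m i) with hI
  refine ⟨⟨∑ i ∈ I, dg i, SetLike.prod_mem_graded 𝒜 dg g (fun i _ => hg i)⟩,
    1, le_refl 1, I.card, fun j => g ↑(I.equivFin.symm j), fun j => dg ↑(I.equivFin.symm j),
    fun j => hg _, ?_, ?_⟩
  · rw [pow_one, ← Finset.prod_coe_sort I g]
    exact Fintype.prod_equiv I.equivFin (fun i => g ↑i) (fun j => g ↑(I.equivFin.symm j))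
      (fun i => by simp)
  · have hrange : Set.range (fun j => dg ↑(I.equivFin.symm j))
        = {e : D | ∃ i, k ≤ m i ∧ e = dg i} := by
      ext x
      constructor
      · rintro ⟨j, rfl⟩
        refine ⟨↑(I.equivFin.symm j), ?_, rfl⟩
        have h2 := (I.equivFin.symm j).2
        simp only [hI, Finset.mem_filter] at h2
        exact h2.2
      · rintro ⟨i, hi, rfl⟩
        exact ⟨I.equivFin ⟨i, by simp [hI, hi]⟩, by simp⟩
    rw [hrange]
    exact hfi

lemma aux_factor (k : ℕ) (m : Fin n → ℕ) :
    ∏ i, g i ^ m i = (∏ i ∈ Finset.univ.filter (fun i => k ≤ m i), g i) ^ k *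
      ((∏ i ∈ Finset.univ.filter (fun i => k ≤ m i), g i ^ (m i - k)) *
        ∏ i ∈ Finset.univ.filter (fun i => ¬ k ≤ m i), g i ^ m i) := by
  classical
  rw [← Finset.prod_filter_mul_prod_filter_not Finset.univ (fun i => k ≤ m i)
    (fun i => g i ^ m i)]
  rw [← mul_assoc]
  congr 1
  rw [← Finset.prod_pow, ← Finset.prod_mul_distrib]
  refine Finset.prod_congr rfl fun i hi => ?_
  rw [← pow_add]
  congr 1
  exact (Nat.add_sub_cancel' (Finset.mem_filter.mp hi).2).symm

end Aux


/-- Let `S` be a noetherian ring graded by a finitely generated abelian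
group `D`, generated as an `S_0`-algebra by homogeneous elements `g₁,…,gₙ` of degrees
`d₁,…,dₙ`, and fix `k ≥ 1`.  A degree `d` is *generic* if for every representation
`d = Σ mᵢ dᵢ` (`mᵢ ∈ ℕ`) the set `{dᵢ : mᵢ ≥ k}` generates a finite-index subgroup of
`D`.  If `p ⊆ S_0` is a prime ideal with `S₊^k ⊆ p·S₊` (where `S₊` is the ideal generated
by relevant elements), then for every generic degree `d` one has `p·S_d = S_d`, and
consequently `(S_d)_p = 0` (every element of `S_d` is killed by some `s ∈ S_0 \ p`). -/
theorem stmt_17 {D S : Type*} [AddCommGroup D] [AddGroup.FG D] [DecidableEq D]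
    [CommRing S] (𝒜 : D → AddSubgroup S) [GradedRing 𝒜] [IsNoetherianRing S]
    (n : ℕ) (g : Fin n → S) (dg : Fin n → D) (hg : ∀ i, g i ∈ 𝒜 (dg i))
    (hgen : Subring.closure ((𝒜 0 : Set S) ∪ Set.range g) = ⊤)
    (k : ℕ) (hk : 1 ≤ k)
    (p : Ideal (SetLike.GradeZero.subring 𝒜)) (hp : p.IsPrime)
    (hpk : Ideal.span {f : S | Relevant 𝒜 f} ^ k ≤
      Ideal.map (SetLike.GradeZero.subring 𝒜).subtype p *
        Ideal.span {f : S | Relevant 𝒜 f})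
    (d : D)
    (hd : ∀ m : Fin n → ℕ, d = ∑ i, m i • dg i →
      (AddSubgroup.closure {e : D | ∃ i, k ≤ m i ∧ e = dg i}).FiniteIndex) :
    (∀ x ∈ 𝒜 d, x ∈ AddSubmonoid.closure
        {y : S | ∃ a : SetLike.GradeZero.subring 𝒜, a ∈ p ∧ ∃ x' ∈ 𝒜 d, y = ↑a * x'})
    ∧ (∀ x ∈ 𝒜 d, ∃ s : SetLike.GradeZero.subring 𝒜, s ∉ p ∧ (s : S) * x = 0) := by
  
  classical
  -- Part 1
  have part1 : ∀ x ∈ 𝒜 d, x ∈ AddSubmonoid.closure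
      {y : S | ∃ a : SetLike.GradeZero.subring 𝒜, a ∈ p ∧ ∃ x' ∈ 𝒜 d, y = ↑a * x'} := by
    intro x hx
    have hmem := aux_mono 𝒜 hg hgen x
    suffices h : (DirectSum.decompose 𝒜 x d : S) ∈ AddSubmonoid.closure
        {y : S | ∃ a : SetLike.GradeZero.subring 𝒜, a ∈ p ∧ ∃ x' ∈ 𝒜 d, y = ↑a * x'} by
      rwa [DirectSum.decompose_of_mem_same 𝒜 hx] at h
    clear hx
    induction hmem using AddSubmonoid.closure_induction with
    | mem y hy =>
      obtain ⟨a, ha, m, rfl⟩ := hy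
      have hy𝒜 : a * ∏ i, g i ^ m i ∈ 𝒜 (∑ i, m i • dg i) := by
        have := SetLike.mul_mem_graded ha
          (SetLike.prod_pow_mem_graded (F := Finset.univ) 𝒜 dg g m (fun i _ => hg i))
        rwa [zero_add] at this
      by_cases he : (∑ i, m i • dg i) = d
      · rw [DirectSum.decompose_of_mem_same 𝒜 (he ▸ hy𝒜)]
        refine aux_keyB 𝒜 p ?_ (he ▸ hy𝒜)
        have hrel := aux_relevant 𝒜 hg k m (hd m he.symm)
        have hrel' : (∏ i ∈ Finset.univ.filter (fun i => k ≤ m i), g i)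
            ∈ Ideal.span {f : S | Relevant 𝒜 f} :=
          Ideal.subset_span (show _ ∈ {f : S | Relevant 𝒜 f} from hrel)
        have hpow : (∏ i ∈ Finset.univ.filter (fun i => k ≤ m i), g i) ^ k
            ∈ Ideal.span {f : S | Relevant 𝒜 f} ^ k :=
          Ideal.pow_mem_pow hrel' k
        have hy : a * ∏ i, g i ^ m i ∈ Ideal.span {f : S | Relevant 𝒜 f} ^ k := by
          rw [aux_factor (g := g) k m]
          exact Ideal.mul_mem_left _ _ (Ideal.mul_mem_right _ _ hpow)
        exact Ideal.mul_le_left (hpk hy)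
      · rw [DirectSum.decompose_of_mem_ne 𝒜 hy𝒜 he]
        exact zero_mem _
    | zero => simp only [DirectSum.decompose_zero]; simpa using zero_mem _
    | add y z _ _ hy hz =>
      rw [DirectSum.decompose_add]
      simpa using add_mem hy hz
  refine ⟨part1, ?_⟩
  -- Part 2
  let M : Submodule (SetLike.GradeZero.subring 𝒜) S :=
    { carrier := 𝒜 d
      add_mem' := fun hx hy => add_mem hx hy
      zero_mem' := zero_mem _
      smul_mem' := fun r x hx => by
        have h1 : (r : S) * x ∈ 𝒜 (0 + d) := SetLike.mul_mem_graded r.2 hx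
        rw [zero_add] at h1
        simpa [Subring.smul_def, smul_eq_mul] using h1 }
  -- M is finitely generated
  obtain ⟨s, hs⟩ : (Ideal.span ((𝒜 d : Set S))).FG := IsNoetherian.noetherian _
  have hsub : ∀ y ∈ s, ∃ F : Finset S, ↑F ⊆ (𝒜 d : Set S)
      ∧ y ∈ Submodule.span S (F : Set S) := by
    intro y hy
    have hy2 : y ∈ Ideal.span ((𝒜 d : Set S)) := by
      rw [← hs]; exact Submodule.subset_span hy
    exact Submodule.mem_span_finite_of_mem_span hy2
  choose F hF1 hF2 using hsub
  set G : Finset S := s.attach.biUnion (fun y => F ↑y y.2) with hG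
  have hG1 : (G : Set S) ⊆ (𝒜 d : Set S) := by
    intro y hy
    rw [hG, Finset.coe_biUnion] at hy
    simp only [Set.mem_iUnion, Finset.mem_coe, Finset.mem_attach, true_and] at hy
    obtain ⟨⟨z, hz⟩, _, hy⟩ := hy
    exact hF1 z hz hy
  have hGspan : Submodule.span S (G : Set S) = Ideal.span ((𝒜 d : Set S)) := by
    refine le_antisymm (Submodule.span_le.2 fun y hy => Submodule.subset_span (hG1 hy)) ?_
    rw [← hs]
    refine Submodule.span_le.2 fun y hy => ?_
    refine Submodule.span_mono ?_ (hF2 y hy)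
    intro z hz
    rw [hG, Finset.coe_biUnion]
    exact Set.mem_iUnion.mpr ⟨⟨y, hy⟩, Set.mem_iUnion.mpr ⟨Finset.mem_attach _ _, hz⟩⟩
  have hMG : M = Submodule.span (SetLike.GradeZero.subring 𝒜) (G : Set S) := by
    refine le_antisymm ?_ (Submodule.span_le.2 fun y hy => hG1 hy)
    intro x hx
    have hx' : x ∈ Submodule.span S (G : Set S) := by
      rw [hGspan]; exact Submodule.subset_span hx
    obtain ⟨c, hsupp, hsum⟩ := Submodule.mem_span_set (R := S) |>.mp hx'
    have hx2 : x = ∑ a ∈ c.support, (DirectSum.decompose 𝒜 (c a) 0 : S) * a := by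
      have h1 : x = (DirectSum.decompose 𝒜 x d : S) :=
        (DirectSum.decompose_of_mem_same 𝒜 hx).symm
      rw [h1]
      conv_lhs => rw [← hsum]
      rw [Finsupp.sum]
      rw [show ((DirectSum.decompose 𝒜 (∑ a ∈ c.support, c a • a) d : S))
          = GradedRing.proj 𝒜 d (∑ a ∈ c.support, c a • a) from rfl]
      rw [map_sum]
      refine Finset.sum_congr rfl fun a ha => ?_
      rw [smul_eq_mul, GradedRing.proj_apply]
      exact aux_proj_mul_right' 𝒜 (hG1 (hsupp ha)) _
    rw [hx2]
    refine Submodule.sum_mem _ fun a ha => ?_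
    have h3 : (⟨(DirectSum.decompose 𝒜 (c a) 0 : S), SetLike.coe_mem _⟩ : (SetLike.GradeZero.subring 𝒜)) • a
        ∈ Submodule.span (SetLike.GradeZero.subring 𝒜) (G : Set S) :=
      Submodule.smul_mem _ _ (Submodule.subset_span (hsupp ha))
    simpa [Subring.smul_def, smul_eq_mul] using h3
  have hMfg : M.FG := ⟨G, hMG.symm⟩
  have hle : M ≤ p • M := by
    intro x hx
    have h1 := part1 x hx
    have h2 : AddSubmonoid.closure
        {y : S | ∃ a : SetLike.GradeZero.subring 𝒜, a ∈ p ∧ ∃ x' ∈ 𝒜 d, y = ↑a * x'}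
        ≤ (p • M).toAddSubmonoid := by
      refine AddSubmonoid.closure_le.mpr ?_
      rintro _ ⟨a, ha, x', hx', rfl⟩
      have := Submodule.smul_mem_smul ha (show x' ∈ M from hx')
      simpa [Subring.smul_def, smul_eq_mul] using this
    exact h2 h1
  obtain ⟨r, hr1, hr0⟩ :=
    Submodule.exists_sub_one_mem_and_smul_eq_zero_of_fg_of_le_smul p M hMfg hle
  intro x hx
  refine ⟨r, ?_, ?_⟩
  · intro hrp
    have h1 : (1 : (SetLike.GradeZero.subring 𝒜)) ∈ p := by
      have := p.sub_mem hrp hr1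
      simpa using this
    exact hp.ne_top ((Ideal.eq_top_iff_one p).mpr h1)
  · have := hr0 x hx
    rwa [Subring.smul_def, smul_eq_mul] at this
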